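/- The southwest partial ordering on the set of channels of an extended affine permutation w has a least element and a greatest element. Concretely, for any two channels C₁, C₂, the set of southwest-most elements of C₁ ∪ C₂ (elements b such that no b' ∈ C₁ ∪ C₂ is strictly northeast of b within the union's comparison) forms a channel, and similarly for the northeast-most elements; iterating, there is a channel southwest of all channels and a channel northeast of all channels. -/

import Mathlib

/-- The Shi relation `i ≤_S j` for an extended affine permutation `w`. -/
def ShiLe (n : ℕ) (w : ℤ → ℤ) (i j : ℤ) : Prop :=
  i = j ∨ (j < i ∧ w i < w j) ∨ w i + n < w j

/-- An antichain of the Shi poset of `w` on `{1,…,n}`. -/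
def IsShiAntichain (n : ℕ) (w : ℤ → ℤ) (A : Finset ℤ) : Prop :=
  A ⊆ Finset.Icc (1 : ℤ) n ∧
  ∀ i ∈ A, ∀ j ∈ A, i ≠ j → ¬ ShiLe n w i j ∧ ¬ ShiLe n w j i

/-- `m` is the width (maximal antichain size) of the Shi poset of `w`. -/
def IsShiWidth (n : ℕ) (w : ℤ → ℤ) (m : ℕ) : Prop :=
  (∃ A : Finset ℤ, IsShiAntichain n w A ∧ A.card = m) ∧
  ∀ A : Finset ℤ, IsShiAntichain n w A → A.card ≤ m

/-- A proper numbering of the balls `(i, w i)` of `w`, indexed by rows: monotone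
(strictly northwest implies strictly smaller) and continuous (some ball weakly
northwest is numbered one less). -/
def IsProper (w d : ℤ → ℤ) : Prop :=
  (∀ i j : ℤ, i < j → w i < w j → d i < d j) ∧
  (∀ j : ℤ, ∃ i : ℤ, i ≤ j ∧ w i ≤ w j ∧ d i = d j - 1)

/-- An `(n,n)`-invariant southeast chain of balls of `w` (identified by rows). -/
def IsChannelChain (n : ℕ) (w : ℤ → ℤ) (C : Set ℤ) : Prop :=
  (∀ i : ℤ, i ∈ C ↔ i + n ∈ C) ∧ ∀ i ∈ C, ∀ j ∈ C, i < j → w i < w j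

/-- The density of such a chain: number of `(n,n)`-translate classes. -/
noncomputable def chDensity (n : ℕ) (C : Set ℤ) : ℕ := (C ∩ Set.Icc (1 : ℤ) n).ncard

/-- A channel: an `(n,n)`-invariant southeast chain of maximal density. -/
def IsChannel (n : ℕ) (w : ℤ → ℤ) (C : Set ℤ) : Prop :=
  IsChannelChain n w C ∧
  ∀ D : Set ℤ, IsChannelChain n w D → chDensity n D ≤ chDensity n C

/-- `C₁` is southwest of `C₂`: every element of `C₁` has an element of `C₂`
weakly northeast of it. -/
def ChannelSW (n : ℕ) (w : ℤ → ℤ) (C₁ C₂ : Set ℤ) : Prop :=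
  ∀ i ∈ C₁, ∃ j ∈ C₂, j ≤ i ∧ w i ≤ w j

section Stmt9Aux

variable {n : ℕ} {w : ℤ → ℤ}

/-- Periodicity of `w` for all integer multiples. -/
lemma stmt9_wrep (hper : ∀ i : ℤ, w (i + n) = w i + n) (i : ℤ) :
    ∀ k : ℤ, w (i + k * n) = w i + k * n := by
  intro k
  induction k using Int.induction_on with
  | zero => simp
  | succ k ih =>
    have h := hper (i + (k : ℤ) * n)
    have e : i + ((k : ℤ) + 1) * n = i + (k : ℤ) * n + n := by ring
    have e2 : w i + ((k : ℤ) + 1) * n = (w i + (k : ℤ) * n) + n := by ring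
    rw [e, h, ih, e2]
  | pred k ih =>
    have h := hper (i + (-(k : ℤ) - 1) * n)
    have e : i + (-(k : ℤ) - 1) * n + n = i + (-(k : ℤ)) * n := by ring
    rw [e] at h
    have e2 : w i + (-(k : ℤ) - 1) * n = (w i + (-(k : ℤ)) * n) - n := by ring
    rw [e2, ← ih]
    omega

/-- Periodicity of a periodic set for all integer multiples. -/
lemma stmt9_memrep {C : Set ℤ} (hC : ∀ i : ℤ, i ∈ C ↔ i + n ∈ C) (i : ℤ) :
    ∀ k : ℤ, i ∈ C ↔ i + k * n ∈ C := by
  intro k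
  induction k using Int.induction_on with
  | zero => simp
  | succ k ih =>
    have h := hC (i + (k : ℤ) * n)
    have e : i + (k : ℤ) * n + n = i + ((k : ℤ) + 1) * n := by ring
    rw [e] at h
    exact ih.trans h
  | pred k ih =>
    have h := hC (i + (-(k : ℤ) - 1) * n)
    have e : i + (-(k : ℤ) - 1) * n + n = i + (-(k : ℤ)) * n := by ring
    rw [e] at h
    exact ih.trans h.symm

/-- Every integer has a translate by a multiple of `n` in the window `[1, n]`. -/
lemma stmt9_reduce (hn : 0 < n) (a : ℤ) :
    ∃ k : ℤ, a + k * n ∈ Set.Icc (1 : ℤ) n := by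
  refine ⟨-((a - 1) / n), ?_⟩
  have hn' : (0 : ℤ) < n := by exact_mod_cast hn
  have h1 : 0 ≤ (a - 1) % n := Int.emod_nonneg _ (by omega)
  have h2 : (a - 1) % n < n := Int.emod_lt_of_pos _ hn'
  have hd : (a - 1) % n = a - 1 - n * ((a - 1) / n) := by
    rw [Int.emod_def]
  constructor <;> nlinarith [h1, h2, hd]

/-- Two window translates coincide. -/
lemma stmt9_window_unique (hn : 0 < n) {a : ℤ} {k k' : ℤ}
    (h : a + k * n ∈ Set.Icc (1 : ℤ) n) (h' : a + k' * n ∈ Set.Icc (1 : ℤ) n) :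
    k = k' := by
  have hn' : (0 : ℤ) < n := by exact_mod_cast hn
  obtain ⟨h1, h2⟩ := h
  obtain ⟨h3, h4⟩ := h'
  by_contra hne
  rcases lt_or_gt_of_ne hne with hlt | hlt
  · have : (1 : ℤ) ≤ k' - k := by omega
    nlinarith
  · have : (1 : ℤ) ≤ k - k' := by omega
    nlinarith

/-- No strictly-northeast pair inside a single channel chain. -/
lemma stmt9_noNE {C : Set ℤ} (hC : IsChannelChain n w C) {u v : ℤ}
    (hu : u ∈ C) (hv : v ∈ C) (h1 : v < u) (h2 : w u < w v) : False := by
  have := hC.2 v hv u hu h1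
  omega

/-- No 3-element chain in the northeast order inside the union of two chains. -/
lemma stmt9_no3 {C₁ C₂ : Set ℤ} (h1 : IsChannelChain n w C₁)
    (h2 : IsChannelChain n w C₂) {u v z : ℤ}
    (hu : u ∈ C₁ ∪ C₂) (hv : v ∈ C₁ ∪ C₂) (hz : z ∈ C₁ ∪ C₂)
    (ha : v < u) (hb : w u < w v) (hc : z < v) (hd : w v < w z) : False := by
  have hzu : z < u := hc.trans ha
  have hwu : w u < w z := hb.trans hd
  rcases hu with hu | hu <;> rcases hv with hv | hv <;> rcases hz with hz | hz <;>
    first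
      | exact stmt9_noNE h1 hu hv ha hb
      | exact stmt9_noNE h2 hu hv ha hb
      | exact stmt9_noNE h1 hv hz hc hd
      | exact stmt9_noNE h2 hv hz hc hd
      | exact stmt9_noNE h1 hu hz hzu hwu
      | exact stmt9_noNE h2 hu hz hzu hwu

end Stmt9Aux

section Stmt9Main

variable {n : ℕ} {w : ℤ → ℤ}

/-- The set of southwest-most elements (records) of the union of two channels
is a channel. -/
lemma stmt9_rec_channel (hbij : Function.Bijective w)
    (hper : ∀ i : ℤ, w (i + n) = w i + n) {C₁ C₂ : Set ℤ}
    (hc1 : IsChannel n w C₁) (hc2 : IsChannel n w C₂) :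
    IsChannel n w {i ∈ C₁ ∪ C₂ | ¬∃ j ∈ C₁ ∪ C₂, j < i ∧ w i < w j} := by
  set U : Set ℤ := C₁ ∪ C₂ with hUdef
  set R : Set ℤ := {i ∈ U | ¬∃ j ∈ U, j < i ∧ w i < w j} with hRdef
  have hUper : ∀ i : ℤ, i ∈ U ↔ i + n ∈ U := fun i =>
    or_congr (hc1.1.1 i) (hc2.1.1 i)
  have hwsub : ∀ i : ℤ, w (i - n) = w i - n := by
    intro i
    have := hper (i - n)
    have e : i - n + n = i := by ring
    rw [e] at this
    omega
  -- R is periodic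
  have hRper : ∀ i : ℤ, i ∈ R ↔ i + n ∈ R := by
    intro i
    constructor
    · rintro ⟨hiU, hno⟩
      refine ⟨(hUper i).1 hiU, ?_⟩
      rintro ⟨j, hjU, hj1, hj2⟩
      refine hno ⟨j - n, ?_, by omega, ?_⟩
      · have := (hUper (j - n)).2
        apply this
        have e : j - n + n = j := by ring
        rw [e]; exact hjU
      · have := hwsub j
        have := hper i
        omega
    · rintro ⟨hiU, hno⟩
      refine ⟨(hUper i).2 hiU, ?_⟩
      rintro ⟨j, hjU, hj1, hj2⟩
      refine hno ⟨j + n, (hUper j).1 hjU, by omega, ?_⟩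
      have := hper j
      have := hper i
      omega
  -- R is a chain
  have hRchain : ∀ i ∈ R, ∀ j ∈ R, i < j → w i < w j := by
    intro i hi j hj hij
    by_contra hle
    have hne : w j ≠ w i := fun h => by
      have := hbij.injective h; omega
    have hji : w j < w i := lt_of_le_of_ne (not_lt.1 hle) hne
    exact hj.2 ⟨i, hi.1, hij, hji⟩
  -- C₁ ∩ C₂ ⊆ R
  have hsub : C₁ ∩ C₂ ⊆ R := by
    rintro u ⟨h1, h2⟩
    refine ⟨Or.inl h1, ?_⟩
    rintro ⟨z, hzU, hz1, hz2⟩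
    rcases hzU with hz | hz
    · exact stmt9_noNE hc1.1 h1 hz hz1 hz2
    · exact stmt9_noNE hc2.1 h2 hz hz1 hz2
  -- the complementary chain E
  set E : Set ℤ := (U \ R) ∪ (C₁ ∩ C₂) with hEdef
  have hEsubU : E ⊆ U := by
    rintro x (hx | hx)
    · exact hx.1
    · exact Or.inl hx.1
  have hEper : ∀ i : ℤ, i ∈ E ↔ i + n ∈ E := by
    intro i
    have h1 : i ∈ U \ R ↔ i + n ∈ U \ R :=
      and_congr (hUper i) (not_congr (hRper i))
    have h2 : i ∈ C₁ ∩ C₂ ↔ i + n ∈ C₁ ∩ C₂ :=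
      and_congr (hc1.1.1 i) (hc2.1.1 i)
    exact or_congr h1 h2
  have hEchain : ∀ i ∈ E, ∀ j ∈ E, i < j → w i < w j := by
    intro i hi j hj hij
    by_contra hle
    have hne : w j ≠ w i := fun h => by
      have := hbij.injective h; omega
    have hji : w j < w i := lt_of_le_of_ne (not_lt.1 hle) hne
    rcases hi with ⟨hiU, hiR⟩ | ⟨hi1, hi2⟩
    · have hw : ∃ z ∈ U, z < i ∧ w i < w z := by
        by_contra h
        exact hiR ⟨hiU, h⟩
      obtain ⟨z, hzU, hz1, hz2⟩ := hw
      exact stmt9_no3 hc1.1 hc2.1 (hEsubU hj) hiU hzU hij hji hz1 hz2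
    · rcases hEsubU hj with hj1 | hj2
      · exact stmt9_noNE hc1.1 hj1 hi1 hij hji
      · exact stmt9_noNE hc2.1 hj2 hi2 hij hji
  -- densities
  have hIfin : (Set.Icc (1 : ℤ) n).Finite := Set.finite_Icc _ _
  have hfin : ∀ S : Set ℤ, (S ∩ Set.Icc (1 : ℤ) n).Finite :=
    fun S => hIfin.subset Set.inter_subset_right
  have e1 : (C₁ ∩ Set.Icc (1 : ℤ) n) ∪ (C₂ ∩ Set.Icc (1 : ℤ) n) =
      U ∩ Set.Icc (1 : ℤ) n := (Set.union_inter_distrib_right _ _ _).symm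
  have e2 : (C₁ ∩ Set.Icc (1 : ℤ) n) ∩ (C₂ ∩ Set.Icc (1 : ℤ) n) =
      (C₁ ∩ C₂) ∩ Set.Icc (1 : ℤ) n := by
    ext x
    simp only [Set.mem_inter_iff]
    tauto
  have eq1 := Set.ncard_union_add_ncard_inter (C₁ ∩ Set.Icc (1 : ℤ) n)
    (C₂ ∩ Set.Icc (1 : ℤ) n) (hfin _) (hfin _)
  rw [e1, e2] at eq1
  have e3 : U ∩ Set.Icc (1 : ℤ) n =
      (R ∩ Set.Icc (1 : ℤ) n) ∪ ((U \ R) ∩ Set.Icc (1 : ℤ) n) := by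
    ext x
    constructor
    · rintro ⟨hxU, hxI⟩
      by_cases hxR : x ∈ R
      · exact Or.inl ⟨hxR, hxI⟩
      · exact Or.inr ⟨⟨hxU, hxR⟩, hxI⟩
    · rintro (⟨hxR, hxI⟩ | ⟨⟨hxU, _⟩, hxI⟩)
      · exact ⟨hxR.1, hxI⟩
      · exact ⟨hxU, hxI⟩
  have hdisj1 : Disjoint (R ∩ Set.Icc (1 : ℤ) n) ((U \ R) ∩ Set.Icc (1 : ℤ) n) := by
    rw [Set.disjoint_left]
    rintro x ⟨hxR, _⟩ ⟨⟨_, hxR'⟩, _⟩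
    exact hxR' hxR
  have eq2 : (U ∩ Set.Icc (1 : ℤ) n).ncard =
      (R ∩ Set.Icc (1 : ℤ) n).ncard + ((U \ R) ∩ Set.Icc (1 : ℤ) n).ncard := by
    rw [e3]
    exact Set.ncard_union_eq hdisj1 (hfin _) (hfin _)
  have e4 : E ∩ Set.Icc (1 : ℤ) n =
      ((U \ R) ∩ Set.Icc (1 : ℤ) n) ∪ ((C₁ ∩ C₂) ∩ Set.Icc (1 : ℤ) n) :=
    Set.union_inter_distrib_right _ _ _
  have hdisj2 : Disjoint ((U \ R) ∩ Set.Icc (1 : ℤ) n)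
      ((C₁ ∩ C₂) ∩ Set.Icc (1 : ℤ) n) := by
    rw [Set.disjoint_left]
    rintro x ⟨⟨_, hxR⟩, _⟩ ⟨hx12, _⟩
    exact hxR (hsub hx12)
  have eq3 : (E ∩ Set.Icc (1 : ℤ) n).ncard =
      ((U \ R) ∩ Set.Icc (1 : ℤ) n).ncard +
        ((C₁ ∩ C₂) ∩ Set.Icc (1 : ℤ) n).ncard := by
    rw [e4]
    exact Set.ncard_union_eq hdisj2 (hfin _) (hfin _)
  have hEle : chDensity n E ≤ chDensity n C₁ := hc1.2 E ⟨hEper, hEchain⟩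
  refine ⟨⟨hRper, hRchain⟩, fun D hD => le_trans (hc2.2 D hD) ?_⟩
  have hgoal : chDensity n C₂ ≤ chDensity n R := by
    unfold chDensity at *
    omega
  exact hgoal

end Stmt9Main

section Stmt9Main2

variable {n : ℕ} {w : ℤ → ℤ}

/-- The set of northeast-most elements (anti-records) of the union of two
channels is a channel. -/
lemma stmt9_arec_channel (hbij : Function.Bijective w)
    (hper : ∀ i : ℤ, w (i + n) = w i + n) {C₁ C₂ : Set ℤ}
    (hc1 : IsChannel n w C₁) (hc2 : IsChannel n w C₂) :
    IsChannel n w {i ∈ C₁ ∪ C₂ | ¬∃ j ∈ C₁ ∪ C₂, i < j ∧ w j < w i} := by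
  set U : Set ℤ := C₁ ∪ C₂ with hUdef
  set R : Set ℤ := {i ∈ U | ¬∃ j ∈ U, i < j ∧ w j < w i} with hRdef
  have hUper : ∀ i : ℤ, i ∈ U ↔ i + n ∈ U := fun i =>
    or_congr (hc1.1.1 i) (hc2.1.1 i)
  have hwsub : ∀ i : ℤ, w (i - n) = w i - n := by
    intro i
    have := hper (i - n)
    have e : i - n + n = i := by ring
    rw [e] at this
    omega
  have hRper : ∀ i : ℤ, i ∈ R ↔ i + n ∈ R := by
    intro i
    constructor
    · rintro ⟨hiU, hno⟩
      refine ⟨(hUper i).1 hiU, ?_⟩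
      rintro ⟨j, hjU, hj1, hj2⟩
      refine hno ⟨j - n, ?_, by omega, ?_⟩
      · have := (hUper (j - n)).2
        apply this
        have e : j - n + n = j := by ring
        rw [e]; exact hjU
      · have := hwsub j
        have := hper i
        omega
    · rintro ⟨hiU, hno⟩
      refine ⟨(hUper i).2 hiU, ?_⟩
      rintro ⟨j, hjU, hj1, hj2⟩
      refine hno ⟨j + n, (hUper j).1 hjU, by omega, ?_⟩
      have := hper j
      have := hper i
      omega
  have hRchain : ∀ i ∈ R, ∀ j ∈ R, i < j → w i < w j := by
    intro i hi j hj hij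
    by_contra hle
    have hne : w j ≠ w i := fun h => by
      have := hbij.injective h; omega
    have hji : w j < w i := lt_of_le_of_ne (not_lt.1 hle) hne
    exact hi.2 ⟨j, hj.1, hij, hji⟩
  have hsub : C₁ ∩ C₂ ⊆ R := by
    rintro u ⟨h1, h2⟩
    refine ⟨Or.inl h1, ?_⟩
    rintro ⟨z, hzU, hz1, hz2⟩
    rcases hzU with hz | hz
    · exact stmt9_noNE hc1.1 hz h1 hz1 hz2
    · exact stmt9_noNE hc2.1 hz h2 hz1 hz2
  set E : Set ℤ := (U \ R) ∪ (C₁ ∩ C₂) with hEdef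
  have hEsubU : E ⊆ U := by
    rintro x (hx | hx)
    · exact hx.1
    · exact Or.inl hx.1
  have hEper : ∀ i : ℤ, i ∈ E ↔ i + n ∈ E := by
    intro i
    have h1 : i ∈ U \ R ↔ i + n ∈ U \ R :=
      and_congr (hUper i) (not_congr (hRper i))
    have h2 : i ∈ C₁ ∩ C₂ ↔ i + n ∈ C₁ ∩ C₂ :=
      and_congr (hc1.1.1 i) (hc2.1.1 i)
    exact or_congr h1 h2
  have hEchain : ∀ i ∈ E, ∀ j ∈ E, i < j → w i < w j := by
    intro i hi j hj hij
    by_contra hle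
    have hne : w j ≠ w i := fun h => by
      have := hbij.injective h; omega
    have hji : w j < w i := lt_of_le_of_ne (not_lt.1 hle) hne
    rcases hj with ⟨hjU, hjR⟩ | ⟨hj1, hj2⟩
    · have hw : ∃ z ∈ U, j < z ∧ w z < w j := by
        by_contra h
        exact hjR ⟨hjU, h⟩
      obtain ⟨z, hzU, hz1, hz2⟩ := hw
      exact stmt9_no3 hc1.1 hc2.1 hzU hjU (hEsubU hi) hz1 hz2 hij hji
    · rcases hEsubU hi with hi1 | hi2
      · exact stmt9_noNE hc1.1 hj1 hi1 hij hji
      · exact stmt9_noNE hc2.1 hj2 hi2 hij hji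
  have hIfin : (Set.Icc (1 : ℤ) n).Finite := Set.finite_Icc _ _
  have hfin : ∀ S : Set ℤ, (S ∩ Set.Icc (1 : ℤ) n).Finite :=
    fun S => hIfin.subset Set.inter_subset_right
  have e1 : (C₁ ∩ Set.Icc (1 : ℤ) n) ∪ (C₂ ∩ Set.Icc (1 : ℤ) n) =
      U ∩ Set.Icc (1 : ℤ) n := (Set.union_inter_distrib_right _ _ _).symm
  have e2 : (C₁ ∩ Set.Icc (1 : ℤ) n) ∩ (C₂ ∩ Set.Icc (1 : ℤ) n) =
      (C₁ ∩ C₂) ∩ Set.Icc (1 : ℤ) n := by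
    ext x
    simp only [Set.mem_inter_iff]
    tauto
  have eq1 := Set.ncard_union_add_ncard_inter (C₁ ∩ Set.Icc (1 : ℤ) n)
    (C₂ ∩ Set.Icc (1 : ℤ) n) (hfin _) (hfin _)
  rw [e1, e2] at eq1
  have e3 : U ∩ Set.Icc (1 : ℤ) n =
      (R ∩ Set.Icc (1 : ℤ) n) ∪ ((U \ R) ∩ Set.Icc (1 : ℤ) n) := by
    ext x
    constructor
    · rintro ⟨hxU, hxI⟩
      by_cases hxR : x ∈ R
      · exact Or.inl ⟨hxR, hxI⟩
      · exact Or.inr ⟨⟨hxU, hxR⟩, hxI⟩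
    · rintro (⟨hxR, hxI⟩ | ⟨⟨hxU, _⟩, hxI⟩)
      · exact ⟨hxR.1, hxI⟩
      · exact ⟨hxU, hxI⟩
  have hdisj1 : Disjoint (R ∩ Set.Icc (1 : ℤ) n) ((U \ R) ∩ Set.Icc (1 : ℤ) n) := by
    rw [Set.disjoint_left]
    rintro x ⟨hxR, _⟩ ⟨⟨_, hxR'⟩, _⟩
    exact hxR' hxR
  have eq2 : (U ∩ Set.Icc (1 : ℤ) n).ncard =
      (R ∩ Set.Icc (1 : ℤ) n).ncard + ((U \ R) ∩ Set.Icc (1 : ℤ) n).ncard := by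
    rw [e3]
    exact Set.ncard_union_eq hdisj1 (hfin _) (hfin _)
  have e4 : E ∩ Set.Icc (1 : ℤ) n =
      ((U \ R) ∩ Set.Icc (1 : ℤ) n) ∪ ((C₁ ∩ C₂) ∩ Set.Icc (1 : ℤ) n) :=
    Set.union_inter_distrib_right _ _ _
  have hdisj2 : Disjoint ((U \ R) ∩ Set.Icc (1 : ℤ) n)
      ((C₁ ∩ C₂) ∩ Set.Icc (1 : ℤ) n) := by
    rw [Set.disjoint_left]
    rintro x ⟨⟨_, hxR⟩, _⟩ ⟨hx12, _⟩
    exact hxR (hsub hx12)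
  have eq3 : (E ∩ Set.Icc (1 : ℤ) n).ncard =
      ((U \ R) ∩ Set.Icc (1 : ℤ) n).ncard +
        ((C₁ ∩ C₂) ∩ Set.Icc (1 : ℤ) n).ncard := by
    rw [e4]
    exact Set.ncard_union_eq hdisj2 (hfin _) (hfin _)
  have hEle : chDensity n E ≤ chDensity n C₁ := hc1.2 E ⟨hEper, hEchain⟩
  refine ⟨⟨hRper, hRchain⟩, fun D hD => le_trans (hc2.2 D hD) ?_⟩
  have hgoal : chDensity n C₂ ≤ chDensity n R := by
    unfold chDensity at *
    omega
  exact hgoal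

end Stmt9Main2

section Stmt9SW

variable {n : ℕ} {w : ℤ → ℤ}

/-- A new translate class cannot be inserted into a channel while keeping the
chain conditions: that would contradict maximal density. -/
lemma stmt9_insert_contra (hn : 0 < n)
    (hper : ∀ i : ℤ, w (i + n) = w i + n) {X : Set ℤ}
    (hX : IsChannel n w X) (a : ℤ) (ha : a ∉ X)
    (h1 : ∀ c ∈ X, c < a → w c < w a)
    (h2 : ∀ c ∈ X, a < c → w a < w c) : False := by
  have hn' : (0 : ℤ) < n := by exact_mod_cast hn
  set D : Set ℤ := X ∪ {j | ∃ k : ℤ, j = a + k * n} with hD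
  have hXper := hX.1.1
  have hclass : ∀ j : ℤ, (∃ k : ℤ, j = a + k * n) ↔ (∃ k : ℤ, j + n = a + k * n) := by
    intro j
    constructor
    · rintro ⟨k, rfl⟩; exact ⟨k + 1, by ring⟩
    · rintro ⟨k, hk⟩
      refine ⟨k - 1, ?_⟩
      have : (k - 1) * (n : ℤ) = k * n - n := by ring
      omega
  have hDchain : IsChannelChain n w D := by
    constructor
    · intro i
      exact or_congr (hXper i) (hclass i)
    · rintro i hi j hj hij
      rcases hi with hi | ⟨k, rfl⟩ <;> rcases hj with hj | ⟨k', rfl⟩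
      · exact hX.1.2 i hi j hj hij
      · have hmem : i + (-k') * n ∈ X := (stmt9_memrep hXper i (-k')).1 hi
        have hlt : i + (-k') * n < a := by
          have : (-k') * (n : ℤ) = -(k' * n) := by ring
          omega
        have hc := h1 _ hmem hlt
        have hw1 := stmt9_wrep hper i (-k')
        have hw2 := stmt9_wrep hper a k'
        have e : (-k') * (n : ℤ) = -(k' * n) := by ring
        omega
      · have hmem : j + (-k) * n ∈ X := (stmt9_memrep hXper j (-k)).1 hj
        have hlt : a < j + (-k) * n := by
          have : (-k) * (n : ℤ) = -(k * n) := by ring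
          omega
        have hc := h2 _ hmem hlt
        have hw1 := stmt9_wrep hper j (-k)
        have hw2 := stmt9_wrep hper a k
        have e : (-k) * (n : ℤ) = -(k * n) := by ring
        omega
      · have hw1 := stmt9_wrep hper a k
        have hw2 := stmt9_wrep hper a k'
        omega
  obtain ⟨k₀, hk₀⟩ := stmt9_reduce hn a
  have ha₀X : a + k₀ * n ∉ X := fun h => ha ((stmt9_memrep hXper a k₀).2 h)
  have hclassI : {j : ℤ | ∃ k : ℤ, j = a + k * n} ∩ Set.Icc (1 : ℤ) n
      = {a + k₀ * n} := by
    ext x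
    simp only [Set.mem_inter_iff, Set.mem_setOf_eq, Set.mem_singleton_iff]
    constructor
    · rintro ⟨⟨k, rfl⟩, hx⟩
      rw [stmt9_window_unique hn hx hk₀]
    · rintro rfl
      exact ⟨⟨k₀, rfl⟩, hk₀⟩
  have hfin : (X ∩ Set.Icc (1 : ℤ) n).Finite :=
    (Set.finite_Icc _ _).subset Set.inter_subset_right
  have hDI : D ∩ Set.Icc (1 : ℤ) n
      = insert (a + k₀ * n) (X ∩ Set.Icc (1 : ℤ) n) := by
    rw [hD, Set.union_inter_distrib_right, hclassI, Set.insert_eq, Set.union_comm]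
  have hcard : chDensity n D = chDensity n X + 1 := by
    unfold chDensity
    rw [hDI, Set.ncard_insert_of_notMem (fun h => ha₀X h.1) hfin]
  have hle := hX.2 D hDchain
  omega

/-- Every ball of the union has a record weakly northeast of it. -/
lemma stmt9_sw_to_rec (hn : 0 < n) (hbij : Function.Bijective w)
    (hper : ∀ i : ℤ, w (i + n) = w i + n) {C₁ C₂ : Set ℤ}
    (hc1 : IsChannel n w C₁) (hc2 : IsChannel n w C₂) :
    ∀ u ∈ C₁ ∪ C₂, ∃ r ∈ {i ∈ C₁ ∪ C₂ | ¬∃ j ∈ C₁ ∪ C₂, j < i ∧ w i < w j},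
      r ≤ u ∧ w u ≤ w r := by
  intro u hu
  by_contra hno
  have hno' : ∀ r ∈ {i ∈ C₁ ∪ C₂ | ¬∃ j ∈ C₁ ∪ C₂, j < i ∧ w i < w j},
      r ≤ u → w r < w u := by
    intro r hr hru
    by_contra hge
    exact hno ⟨r, hr, hru, by omega⟩
  have hRch := stmt9_rec_channel hbij hper hc1 hc2
  have haR : u ∉ {i ∈ C₁ ∪ C₂ | ¬∃ j ∈ C₁ ∪ C₂, j < i ∧ w i < w j} :=
    fun h => absurd (hno' u h le_rfl) (by simp)
  apply stmt9_insert_contra hn hper hRch u haR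
  · intro c hc hcu
    exact hno' c hc hcu.le
  · intro c hc huc
    by_contra hle
    have hne : w c ≠ w u := fun h => by
      have := hbij.injective h; omega
    have hwc : w c < w u := lt_of_le_of_ne (not_lt.1 hle) hne
    exact hc.2 ⟨u, hu, huc, hwc⟩

/-- Every anti-record has an element of each original channel weakly
northeast of it. -/
lemma stmt9_arec_sw (hn : 0 < n) (hbij : Function.Bijective w)
    (hper : ∀ i : ℤ, w (i + n) = w i + n) {X U : Set ℤ}
    (hX : IsChannel n w X) (hXU : X ⊆ U) :
    ∀ u ∈ U, (¬∃ j ∈ U, u < j ∧ w j < w u) → ∃ j ∈ X, j ≤ u ∧ w u ≤ w j := by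
  intro u huU hu
  by_contra hno
  push_neg at hno
  have haX : u ∉ X := fun h => absurd (hno u h le_rfl) (by simp)
  apply stmt9_insert_contra hn hper hX u haX
  · intro c hc hcu
    exact hno c hc hcu.le
  · intro c hc huc
    by_contra hle
    have hne : w c ≠ w u := fun h => by
      have := hbij.injective h; omega
    have hwc : w c < w u := lt_of_le_of_ne (not_lt.1 hle) hne
    exact hu ⟨c, hXU hc, huc, hwc⟩

/-- `ChannelSW` is transitive. -/
lemma stmt9_sw_trans {A B C : Set ℤ} (h1 : ChannelSW n w A B)
    (h2 : ChannelSW n w B C) : ChannelSW n w A C := by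
  intro i hi
  obtain ⟨j, hj, hj1, hj2⟩ := h1 i hi
  obtain ⟨k, hk, hk1, hk2⟩ := h2 j hj
  exact ⟨k, hk, hk1.trans hj1, hj2.trans hk2⟩

end Stmt9SW

section Stmt9Final

variable {n : ℕ} {w : ℤ → ℤ}

/-- There exists a channel. -/
lemma stmt9_exists_channel (hn : 0 < n) (w : ℤ → ℤ) :
    ∃ C : Set ℤ, IsChannel n w C := by
  have h0 : IsChannelChain n w (∅ : Set ℤ) :=
    ⟨fun i => by simp, fun i hi => absurd hi (Set.notMem_empty i)⟩
  set K : Set ℕ := {k | ∃ D : Set ℤ, IsChannelChain n w D ∧ chDensity n D = k}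
    with hK
  have hKne : K.Nonempty := ⟨chDensity n ∅, ∅, h0, rfl⟩
  have hbdd : BddAbove K := by
    refine ⟨(Set.Icc (1 : ℤ) n).ncard, ?_⟩
    rintro k ⟨D, _, rfl⟩
    exact Set.ncard_le_ncard Set.inter_subset_right (Set.finite_Icc _ _)
  obtain ⟨C, hC, hCd⟩ := Nat.sSup_mem hKne hbdd
  exact ⟨C, hC, fun D hD => hCd ▸ le_csSup hbdd ⟨D, hD, rfl⟩⟩

/-- There are only finitely many channels. -/
lemma stmt9_channels_finite (hn : 0 < n) (w : ℤ → ℤ) :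
    {C : Set ℤ | IsChannel n w C}.Finite := by
  have himage : ((fun C : Set ℤ => C ∩ Set.Icc (1 : ℤ) n) ''
      {C : Set ℤ | IsChannel n w C}).Finite := by
    apply Set.Finite.subset (Set.Finite.finite_subsets (Set.finite_Icc (1 : ℤ) n))
    rintro _ ⟨C, _, rfl⟩
    exact Set.inter_subset_right
  refine Set.Finite.of_finite_image himage ?_
  intro C hC D hD hCD
  replace hCD : C ∩ Set.Icc (1 : ℤ) n = D ∩ Set.Icc (1 : ℤ) n := hCD
  ext i
  obtain ⟨k, hk⟩ := stmt9_reduce hn i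
  have h1 := stmt9_memrep hC.1.1 i k
  have h2 := stmt9_memrep hD.1.1 i k
  constructor
  · intro h
    have hm : i + k * n ∈ C ∩ Set.Icc (1 : ℤ) n := ⟨h1.1 h, hk⟩
    rw [hCD] at hm
    exact h2.2 hm.1
  · intro h
    have hm : i + k * n ∈ D ∩ Set.Icc (1 : ℤ) n := ⟨h2.1 h, hk⟩
    rw [← hCD] at hm
    exact h1.2 hm.1

/-- A channel southwest of all channels. -/
lemma stmt9_glb (hn : 0 < n) (hbij : Function.Bijective w)
    (hper : ∀ i : ℤ, w (i + n) = w i + n) :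
    ∃ C : Set ℤ, IsChannel n w C ∧
      ∀ C' : Set ℤ, IsChannel n w C' → ChannelSW n w C C' := by
  classical
  have hfin := stmt9_channels_finite hn w
  suffices H : ∀ T : Finset (Set ℤ), (∀ X ∈ T, IsChannel n w X) →
      ∃ C : Set ℤ, IsChannel n w C ∧ ∀ X ∈ T, ChannelSW n w C X by
    obtain ⟨C, hC, h⟩ := H hfin.toFinset (fun X hX => (hfin.mem_toFinset).1 hX)
    exact ⟨C, hC, fun C' hC' => h C' (hfin.mem_toFinset.2 hC')⟩
  intro T
  induction T using Finset.induction_on with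
  | empty =>
    intro _
    obtain ⟨C, hC⟩ := stmt9_exists_channel hn w
    exact ⟨C, hC, by simp⟩
  | @insert A T hA ih =>
    intro hT
    obtain ⟨C, hC, hall⟩ := ih (fun X hX => hT X (Finset.mem_insert_of_mem hX))
    have hAch : IsChannel n w A := hT A (Finset.mem_insert_self _ _)
    have hnew : IsChannel n w {i ∈ C ∪ A | ¬∃ j ∈ C ∪ A, i < j ∧ w j < w i} :=
      stmt9_arec_channel hbij hper hC hAch
    have hswC : ChannelSW n w {i ∈ C ∪ A | ¬∃ j ∈ C ∪ A, i < j ∧ w j < w i} C :=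
      fun i hi => stmt9_arec_sw hn hbij hper hC Set.subset_union_left i hi.1 hi.2
    have hswA : ChannelSW n w {i ∈ C ∪ A | ¬∃ j ∈ C ∪ A, i < j ∧ w j < w i} A :=
      fun i hi => stmt9_arec_sw hn hbij hper hAch Set.subset_union_right i hi.1 hi.2
    refine ⟨_, hnew, ?_⟩
    intro X hX
    rcases Finset.mem_insert.1 hX with rfl | hX
    · exact hswA
    · exact stmt9_sw_trans hswC (hall X hX)

/-- A channel northeast of all channels. -/
lemma stmt9_lub (hn : 0 < n) (hbij : Function.Bijective w)
    (hper : ∀ i : ℤ, w (i + n) = w i + n) :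
    ∃ C : Set ℤ, IsChannel n w C ∧
      ∀ C' : Set ℤ, IsChannel n w C' → ChannelSW n w C' C := by
  classical
  have hfin := stmt9_channels_finite hn w
  suffices H : ∀ T : Finset (Set ℤ), (∀ X ∈ T, IsChannel n w X) →
      ∃ C : Set ℤ, IsChannel n w C ∧ ∀ X ∈ T, ChannelSW n w X C by
    obtain ⟨C, hC, h⟩ := H hfin.toFinset (fun X hX => (hfin.mem_toFinset).1 hX)
    exact ⟨C, hC, fun C' hC' => h C' (hfin.mem_toFinset.2 hC')⟩
  intro T
  induction T using Finset.induction_on with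
  | empty =>
    intro _
    obtain ⟨C, hC⟩ := stmt9_exists_channel hn w
    exact ⟨C, hC, by simp⟩
  | @insert A T hA ih =>
    intro hT
    obtain ⟨C, hC, hall⟩ := ih (fun X hX => hT X (Finset.mem_insert_of_mem hX))
    have hAch : IsChannel n w A := hT A (Finset.mem_insert_self _ _)
    have hnew : IsChannel n w {i ∈ C ∪ A | ¬∃ j ∈ C ∪ A, j < i ∧ w i < w j} :=
      stmt9_rec_channel hbij hper hC hAch
    have hswC : ChannelSW n w C {i ∈ C ∪ A | ¬∃ j ∈ C ∪ A, j < i ∧ w i < w j} :=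
      fun i hi => stmt9_sw_to_rec hn hbij hper hC hAch i (Or.inl hi)
    have hswA : ChannelSW n w A {i ∈ C ∪ A | ¬∃ j ∈ C ∪ A, j < i ∧ w i < w j} :=
      fun i hi => stmt9_sw_to_rec hn hbij hper hC hAch i (Or.inr hi)
    refine ⟨_, hnew, ?_⟩
    intro X hX
    rcases Finset.mem_insert.1 hX with rfl | hX
    · exact hswA
    · exact stmt9_sw_trans (hall X hX) hswC

end Stmt9Final

theorem stmt9 (n : ℕ) (hn : 0 < n) (w : ℤ → ℤ)
    (hbij : Function.Bijective w) (hper : ∀ i : ℤ, w (i + n) = w i + n) :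
    (∀ C₁ C₂ : Set ℤ, IsChannel n w C₁ → IsChannel n w C₂ →
      IsChannel n w {i ∈ C₁ ∪ C₂ | ¬∃ j ∈ C₁ ∪ C₂, j < i ∧ w i < w j} ∧
      IsChannel n w {i ∈ C₁ ∪ C₂ | ¬∃ j ∈ C₁ ∪ C₂, i < j ∧ w j < w i}) ∧
    (∃ C : Set ℤ, IsChannel n w C ∧
      ∀ C' : Set ℤ, IsChannel n w C' → ChannelSW n w C C') ∧
    (∃ C : Set ℤ, IsChannel n w C ∧
      ∀ C' : Set ℤ, IsChannel n w C' → ChannelSW n w C' C) := by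
  refine ⟨fun C₁ C₂ h1 h2 =>
    ⟨stmt9_rec_channel hbij hper h1 h2, stmt9_arec_channel hbij hper h1 h2⟩,
    stmt9_glb hn hbij hper, stmt9_lub hn hbij hper⟩
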